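/- Let n ≥ 1 and let a < b be real numbers. Let A ⊆ {x ∈ ℝⁿ : x₁ = a} be a nonempty compact convex set and let V ∈ ℝⁿ with first coordinate V₁ = b. Set C := conv(A ∪ {V}) and, for t ∈ [a, b), set C(t) := C ∩ {x ∈ ℝⁿ : x₁ ≥ t}. Then ((b − a)/(b − t))·C(t) = C + ((t − a)/(b − t))·V; in particular, ((b − a)/(b − t))·C(t) is a translate of C. -/

import Mathlib

open Set Pointwise

theorem stmt7 (n : ℕ) (hn : 0 < n) (a b : ℝ) (hab : a < b)
    (A : Set (EuclideanSpace ℝ (Fin n))) (hAne : A.Nonempty) (hAcp : IsCompact A)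
    (hAcv : Convex ℝ A) (hA1 : ∀ x ∈ A, x ⟨0, hn⟩ = a)
    (V : EuclideanSpace ℝ (Fin n)) (hV : V ⟨0, hn⟩ = b)
    (t : ℝ) (ht : a ≤ t) (htb : t < b) :
    ((b - a) / (b - t)) •
        (convexHull ℝ (A ∪ {V}) ∩ {x : EuclideanSpace ℝ (Fin n) | t ≤ x ⟨0, hn⟩})
      = (fun x => x + ((t - a) / (b - t)) • V) '' convexHull ℝ (A ∪ {V}) := by
  have hbt : (0:ℝ) < b - t := by linarith
  have hba : (0:ℝ) < b - a := by linarith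
  obtain ⟨L, hL⟩ : ∃ L : ℝ, L = (b - a) / (b - t) := ⟨_, rfl⟩
  obtain ⟨M, hM⟩ : ∃ M : ℝ, M = (t - a) / (b - t) := ⟨_, rfl⟩
  rw [← hL, ← hM]
  have hLpos : 0 < L := hL ▸ div_pos hba hbt
  have hL0 : L ≠ 0 := hLpos.ne'
  have hLM : L = 1 + M := by rw [hL, hM]; field_simp; ring
  have hMnn : 0 ≤ M := hM ▸ div_nonneg (by linarith) hbt.le
  have hmem : ∀ x, x ∈ convexHull ℝ (A ∪ {V}) ↔
      ∃ p ∈ A, ∃ s : ℝ, 0 ≤ s ∧ s ≤ 1 ∧ x = s • V + (1 - s) • p := by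
    intro x
    rw [Set.union_singleton, convexHull_insert hAne, hAcv.convexHull_eq]
    simp only [mem_convexJoin, Set.mem_singleton_iff, exists_eq_left, segment, Set.mem_setOf_eq]
    constructor
    · rintro ⟨p, hp, u, v, hu, hv, huv, hx⟩
      exact ⟨p, hp, u, hu, by linarith, by rw [← hx, show (1:ℝ) - u = v by linarith]⟩
    · rintro ⟨p, hp, s, hs0, hs1, hx⟩
      exact ⟨p, hp, s, 1 - s, hs0, by linarith, by ring, hx.symm⟩
  have coord : ∀ (s : ℝ), ∀ p ∈ A,
      (s • V + (1 - s) • p) ⟨0, hn⟩ = s * b + (1 - s) * a := by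
    intro s p hp
    simp [PiLp.add_apply, PiLp.smul_apply, hV, hA1 p hp, smul_eq_mul]
  ext x
  constructor
  · rintro ⟨y, ⟨hyC, hyt⟩, rfl⟩
    rcases (hmem y).1 hyC with ⟨p, hp, s, hs0, hs1, rfl⟩
    have hy1 : t ≤ s * b + (1 - s) * a := by
      have h := coord s p hp
      simp only [Set.mem_setOf_eq] at hyt
      linarith [h ▸ hyt]
    have hs : (t - a) / (b - a) ≤ s := by
      rw [div_le_iff₀ hba]; nlinarith
    refine ⟨(L * s - M) • V + (L * (1 - s)) • p,
      (hmem _).2 ⟨p, hp, L * s - M, ?_, ?_, ?_⟩, ?_⟩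
    · have h : M ≤ L * ((t - a) / (b - a)) := by
        rw [hL, hM, div_mul_div_comm, div_le_div_iff₀ hbt (by positivity)]
        nlinarith
      nlinarith [mul_le_mul_of_nonneg_left hs hLpos.le]
    · nlinarith
    · congr 1
      rw [hLM]; ring
    · show ((L * s - M) • V + (L * (1 - s)) • p) + M • V = L • (s • V + (1 - s) • p)
      match_scalars <;> ring
  · rintro ⟨z, hzC, rfl⟩
    rcases (hmem z).1 hzC with ⟨p, hp, u, hu0, hu1, rfl⟩
    have hs1 : (u + M) / L ≤ 1 := by rw [div_le_one hLpos]; linarith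
    refine ⟨((u + M) / L) • V + (1 - (u + M) / L) • p,
      ⟨(hmem _).2 ⟨p, hp, _, by positivity, hs1, rfl⟩, ?_⟩, ?_⟩
    · rw [Set.mem_setOf_eq, coord _ p hp]
      have h2 : M / L = (t - a) / (b - a) := by
        rw [hM, hL]; field_simp
      have hs : (t - a) / (b - a) ≤ (u + M) / L := by
        rw [← h2]; gcongr; linarith
      rw [div_le_iff₀ hba] at hs
      nlinarith
    · show L • (((u + M) / L) • V + (1 - (u + M) / L) • p)
        = (u • V + (1 - u) • p) + M • V
      match_scalars
      · field_simp
      · field_simp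
        linarith [hLM]
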